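/- arXiv:2404.09859 — 3 statements merged into one kernel-verified Lean document; each statement's English description precedes it below -/
import Mathlib

section
/- With the setup of the previous statement (v₁, v₂ isotropic with ⟨v₁,v₂⟩ = 1/2, u a unit vector orthogonal to v₁ and v₂; x = v₁ - v₂ + r·u, y = α v₁ - α⁻¹ v₂ + i s·u, α > 0, α ≠ 1, r,s ∈ (-1,1) nonzero), define q = x - (⟨x,y⟩/|⟨x,y⟩|)·y. Then ⟨q,q⟩ = -2 + r² + s² - √((α²+1)² + 4α²r²s²)/α, and this quantity is strictly negative. -/
noncomputable def herm (x y : Fin 3 → ℂ) : ℂ :=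
  -(x 0 * star (y 0)) + x 1 * star (y 1) + x 2 * star (y 2)

lemma herm_add_left (a b c : Fin 3 → ℂ) : herm (a + b) c = herm a c + herm b c := by
  simp [herm]; ring
lemma herm_sub_left (a b c : Fin 3 → ℂ) : herm (a - b) c = herm a c - herm b c := by
  simp [herm]; ring
lemma herm_smul_left (t : ℂ) (a c : Fin 3 → ℂ) : herm (t • a) c = t * herm a c := by
  simp [herm, Pi.smul_apply, smul_eq_mul]; ring
lemma herm_add_right (a b c : Fin 3 → ℂ) : herm c (a + b) = herm c a + herm c b := by
  simp [herm, star_add]; ring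
lemma herm_sub_right (a b c : Fin 3 → ℂ) : herm c (a - b) = herm c a - herm c b := by
  simp [herm, star_sub]; ring
lemma herm_smul_right (t : ℂ) (a c : Fin 3 → ℂ) : herm c (t • a) = star t * herm c a := by
  simp [herm, Pi.smul_apply, smul_eq_mul, star_mul']; ring
lemma herm_star (a b : Fin 3 → ℂ) : herm a b = star (herm b a) := by
  simp [herm, star_add, star_neg, star_mul', star_star]; ring

theorem stmt_2 (v₁ v₂ u : Fin 3 → ℂ)
    (h11 : herm v₁ v₁ = 0) (h22 : herm v₂ v₂ = 0) (h12 : herm v₁ v₂ = 1 / 2)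
    (huu : herm u u = 1) (hu1 : herm u v₁ = 0) (hu2 : herm u v₂ = 0)
    (α r s : ℝ) (hα : 0 < α) (hα1 : α ≠ 1)
    (hr : r ≠ 0) (hr1 : -1 < r) (hr2 : r < 1)
    (hs : s ≠ 0) (hs1 : -1 < s) (hs2 : s < 1)
    (x y q : Fin 3 → ℂ)
    (hx : x = v₁ - v₂ + (r : ℂ) • u)
    (hy : y = (α : ℂ) • v₁ - ((α : ℂ))⁻¹ • v₂ + (Complex.I * (s : ℂ)) • u)
    (hq : q = x - (herm x y / (‖herm x y‖ : ℂ)) • y) :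
    herm q q = ((-2 + r ^ 2 + s ^ 2 -
        Real.sqrt ((α ^ 2 + 1) ^ 2 + 4 * α ^ 2 * r ^ 2 * s ^ 2) / α : ℝ) : ℂ) ∧
      (-2 + r ^ 2 + s ^ 2 -
        Real.sqrt ((α ^ 2 + 1) ^ 2 + 4 * α ^ 2 * r ^ 2 * s ^ 2) / α : ℝ) < 0 := by
  have hαC : (α : ℂ) ≠ 0 := by exact_mod_cast hα.ne'
  have h21 : herm v₂ v₁ = 1 / 2 := by rw [herm_star, h12]; norm_num
  have h1u : herm v₁ u = 0 := by rw [herm_star, hu1]; simp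
  have h2u : herm v₂ u = 0 := by rw [herm_star, hu2]; simp
  have hxx : herm x x = -1 + (r : ℂ) ^ 2 := by
    rw [hx]
    simp only [herm_add_left, herm_sub_left, herm_smul_left, herm_add_right,
      herm_sub_right, herm_smul_right, h11, h22, h12, h21, huu, hu1, hu2, h1u, h2u,
      Complex.star_def, Complex.conj_ofReal]
    ring
  have hyy : herm y y = -1 + (s : ℂ) ^ 2 := by
    rw [hy]
    simp only [herm_add_left, herm_sub_left, herm_smul_left, herm_add_right,
      herm_sub_right, herm_smul_right, h11, h22, h12, h21, huu, hu1, hu2, h1u, h2u,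
      Complex.star_def, map_mul, Complex.conj_ofReal, Complex.conj_I, map_inv₀]
    field_simp
    linear_combination (-2*(α:ℂ)^2*(s:ℂ)^2) * Complex.I_sq
  set a : ℝ := -(α + α⁻¹) / 2 with ha
  set b : ℝ := -(r * s) with hb
  have hxy : herm x y = (a : ℂ) + (b : ℂ) * Complex.I := by
    rw [hx, hy, ha, hb]
    simp only [herm_add_left, herm_sub_left, herm_smul_left, herm_add_right,
      herm_sub_right, herm_smul_right, h11, h22, h12, h21, huu, hu1, hu2, h1u, h2u,
      Complex.star_def, map_mul, Complex.conj_ofReal, Complex.conj_I, map_inv₀]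
    push_cast
    field_simp
    ring_nf
  have hane : a ≠ 0 := by
    have : 0 < α + α⁻¹ := by positivity
    rw [ha]; intro h; nlinarith
  set A : ℝ := Real.sqrt (a ^ 2 + b ^ 2) with hAdef
  have habpos : 0 < a ^ 2 + b ^ 2 := by positivity
  have hApos : 0 < A := Real.sqrt_pos.2 habpos
  have hAne : ((A : ℝ) : ℂ) ≠ 0 := by exact_mod_cast hApos.ne'
  have hAsq : A ^ 2 = a ^ 2 + b ^ 2 := Real.sq_sqrt habpos.le
  have hA : (‖herm x y‖ : ℝ) = A := by
    rw [hxy, hAdef, Complex.norm_add_mul_I]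
  have hcd : herm x y * star (herm x y) = ((A : ℝ) : ℂ) ^ 2 := by
    rw [Complex.star_def, Complex.mul_conj, Complex.normSq_eq_norm_sq, hA]
    push_cast
    ring
  have hqq : herm q q = ((-2 + r ^ 2 + s ^ 2 - 2 * A : ℝ) : ℂ) := by
    rw [hq]
    simp only [herm_sub_left, herm_sub_right, herm_smul_left, herm_smul_right]
    rw [herm_star y x, hxx, hyy, hA]
    have hd : star (herm x y / ((A : ℝ) : ℂ)) = star (herm x y) / ((A : ℝ) : ℂ) := by
      rw [star_div₀]
      congr 1
      rw [Complex.star_def, Complex.conj_ofReal]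
    rw [hd]
    have hcd' : herm x y * (starRingEnd ℂ) (herm x y) = ((A : ℝ) : ℂ) ^ 2 := by
      rw [← Complex.star_def]; exact hcd
    simp only [Complex.star_def]
    push_cast
    field_simp
    linear_combination (-2*((A:ℝ):ℂ) - 1 + (s:ℂ)^2) * hcd'
  have key : Real.sqrt ((α ^ 2 + 1) ^ 2 + 4 * α ^ 2 * r ^ 2 * s ^ 2) / α = 2 * A := by
    rw [show (α ^ 2 + 1) ^ 2 + 4 * α ^ 2 * r ^ 2 * s ^ 2 = (2 * α) ^ 2 * (a ^ 2 + b ^ 2) by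
      rw [ha, hb]; field_simp; ring]
    rw [Real.sqrt_mul (by positivity), Real.sqrt_sq (by positivity : (0 : ℝ) ≤ 2 * α), hAdef]
    field_simp
  constructor
  · rw [hqq, key]
  · rw [key]
    have h1 : r ^ 2 < 1 := by nlinarith
    have h2 : s ^ 2 < 1 := by nlinarith
    linarith
end

section
/- Let W be a complex 2-dimensional Hermitian space with positive-definite inner product and let R(t₁,t₂)s = ⟨t₂,t₁⟩s + ⟨s,t₁⟩t₂ − ⟨t₁,t₂⟩s − ⟨s,t₂⟩t₁. Let t, n be an orthonormal basis, a ∈ ℝ, b ∈ ℂ with a² + |b|² = 1, t₁ = t, t₂ = i a t + b n. If R(t₁,t₂)t₂ is a real linear combination of t₁ and t₂, then a = 0 or b = 0. -/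
/-- The algebraic curvature tensor of `H²_ℂ` (Anan'in–Grossi); the paper's
pairing `⟨a,b⟩` corresponds to Mathlib's `inner b a`. -/
noncomputable def curv {W : Type*} [NormedAddCommGroup W] [InnerProductSpace ℂ W]
    (t₁ t₂ s : W) : W :=
  (inner ℂ t₁ t₂ : ℂ) • s + (inner ℂ t₁ s : ℂ) • t₂ - (inner ℂ t₂ t₁ : ℂ) • s -
    (inner ℂ t₂ s : ℂ) • t₁

theorem stmt_5 {W : Type*} [NormedAddCommGroup W] [InnerProductSpace ℂ W]
    (hdim : Module.finrank ℂ W = 2)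
    (t n : W) (ht : ‖t‖ = 1) (hn : ‖n‖ = 1) (htn : (inner ℂ t n : ℂ) = 0)
    (a : ℝ) (b : ℂ) (hab : a ^ 2 + ‖b‖ ^ 2 = 1)
    (t₁ t₂ : W) (ht₁ : t₁ = t) (ht₂ : t₂ = (Complex.I * (a : ℂ)) • t + b • n)
    (c d : ℝ) (hreal : curv t₁ t₂ t₂ = (c : ℂ) • t₁ + (d : ℂ) • t₂) :
    a = 0 ∨ b = 0 := by
  by_cases hb : b = 0
  · exact Or.inr hb
  left
  have hnt : (inner ℂ n t : ℂ) = 0 := by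
    rw [← inner_conj_symm, htn, map_zero]
  have htt : (inner ℂ t t : ℂ) = 1 := by
    rw [inner_self_eq_norm_sq_to_K, ht]; norm_num
  have hnn : (inner ℂ n n : ℂ) = 1 := by
    rw [inner_self_eq_norm_sq_to_K, hn]; norm_num
  have key := congrArg (fun x => (inner ℂ n x : ℂ)) hreal
  simp only [curv, ht₁, ht₂, inner_add_right, inner_sub_right, inner_smul_right,
    inner_add_left, inner_smul_left, inner_sub_left, htn, hnt, htt, hnn,
    map_mul, Complex.conj_I, Complex.conj_ofReal, mul_zero, mul_one, zero_mul,
    add_zero, zero_add, sub_zero] at key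
  ring_nf at key
  have h2 : Complex.I * (a : ℂ) * 3 = (d : ℂ) :=
    mul_left_cancel₀ hb (by linear_combination key)
  have h3 := congrArg Complex.im h2
  simp [Complex.mul_im] at h3
  linarith
end

section
/- Let W be a complex 2-dimensional Hermitian inner product space with R(t₁,t₂)s = ⟨t₂,t₁⟩s + ⟨s,t₁⟩t₂ − ⟨t₁,t₂⟩s − ⟨s,t₂⟩t₁. Let t₁, t₂ be unit vectors with ⟨t₁,t₂⟩ = 0, let a,b ∈ ℝ, and t₃ = i a t₁ + i b t₂. If both R(t₁,t₂)t₃ and R(t₁,t₃)t₁ lie in the real span of {t₁, t₂, t₃}, then a = b = 0 (hence t₃ = 0). Consequently, there is no 3-dimensional real subspace S of W that is closed under R and orthonormal-decomposable in this way; i.e., H²_ℂ admits no 3-dimensional curvature-invariant tangent subspace. -/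
theorem stmt_7 {W : Type*} [NormedAddCommGroup W] [InnerProductSpace ℂ W]
    (hdim : Module.finrank ℂ W = 2)
    (t₁ t₂ : W) (ht₁ : ‖t₁‖ = 1) (ht₂ : ‖t₂‖ = 1) (h12 : (inner ℂ t₁ t₂ : ℂ) = 0)
    (a b : ℝ) (t₃ : W)
    (ht₃ : t₃ = (Complex.I * (a : ℂ)) • t₁ + (Complex.I * (b : ℂ)) • t₂)
    (c₁ c₂ c₃ d₁ d₂ d₃ : ℝ)
    (h1 : curv t₁ t₂ t₃ = (c₁ : ℂ) • t₁ + (c₂ : ℂ) • t₂ + (c₃ : ℂ) • t₃)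
    (h2 : curv t₁ t₃ t₁ = (d₁ : ℂ) • t₁ + (d₂ : ℂ) • t₂ + (d₃ : ℂ) • t₃) :
    a = 0 ∧ b = 0 ∧ t₃ = 0 := by
  have e11 : (inner ℂ t₁ t₁ : ℂ) = 1 := by
    rw [inner_self_eq_norm_sq_to_K, ht₁]; norm_num
  have e22 : (inner ℂ t₂ t₂ : ℂ) = 1 := by
    rw [inner_self_eq_norm_sq_to_K, ht₂]; norm_num
  have h21 : (inner ℂ t₂ t₁ : ℂ) = 0 := by
    rw [← inner_conj_symm, h12, map_zero]
  subst ht₃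
  have E1 := congrArg (fun w => (inner ℂ t₁ w : ℂ)) h1
  have E2 := congrArg (fun w => (inner ℂ t₂ w : ℂ)) h1
  simp only [curv, inner_add_right, inner_sub_right, inner_smul_right,
    e11, e22, h12, h21, mul_zero, mul_one, zero_mul, zero_add, add_zero,
    sub_zero, zero_sub] at E1 E2
  have ha : a = 0 ∧ b = 0 := by
    have E1' := Complex.ext_iff.mp E1
    have E2' := Complex.ext_iff.mp E2
    simp [Complex.ext_iff] at E1' E2'
    obtain ⟨p1, q1⟩ := E1'
    obtain ⟨p2, q2⟩ := E2'
    constructor <;> nlinarith [sq_nonneg c₃, sq_nonneg a, sq_nonneg b]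
  refine ⟨ha.1, ha.2, ?_⟩
  rw [ha.1, ha.2]
  simp
end
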